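/- Let a ∈ ℝ, let g : [0,∞) → ℝ be continuously differentiable with a finite limit g(∞) = lim_{t→∞} g(t), and let x : [0,∞) → ℝ be differentiable with ẋ(t) = (a e^{−t} − 1) x(t) + g(t) for all t ≥ 0. Then the limit x(∞) = lim_{t→∞} x(t) exists in ℝ and x(∞) = g(∞). -/

import Mathlib

open Filter Topology

/-- for the scalar linear ODE `ẋ = (a e^{−t} − 1) x + g(t)` with `g`
continuously differentiable on `[0,∞)` and `g(t) → G ∈ ℝ`, the solution converges and
`x(∞) = G`. -/
theorem stmt18 (a : ℝ) (g x : ℝ → ℝ) (G : ℝ)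
    (hg : ContDiffOn ℝ 1 g (Set.Ici (0 : ℝ)))
    (hlim : Tendsto g atTop (nhds G))
    (hode : ∀ t : ℝ, 0 ≤ t → HasDerivAt x ((a * Real.exp (-t) - 1) * x t + g t) t) :
    Tendsto x atTop (nhds G) := by
  -- Integrating factor
  set φ : ℝ → ℝ := fun t => Real.exp (t + a * Real.exp (-t)) with hφdef
  have hφpos : ∀ t, 0 < φ t := fun t => Real.exp_pos _
  have hφderiv : ∀ t : ℝ, HasDerivAt φ (φ t * (1 - a * Real.exp (-t))) t := by
    intro t
    have h2 : HasDerivAt (fun t : ℝ => Real.exp (-t)) (-Real.exp (-t)) t := by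
      exact ((Real.hasDerivAt_exp (-t)).comp t (hasDerivAt_neg t)).congr_deriv (by ring)
    have h1 : HasDerivAt (fun t : ℝ => t + a * Real.exp (-t)) (1 - a * Real.exp (-t)) t := by
      have := (hasDerivAt_id t).add (h2.const_mul a)
      refine this.congr_deriv ?_
      ring
    exact h1.exp
  -- perturbation
  set h : ℝ → ℝ := fun t => g t - (1 - a * Real.exp (-t)) * G with hhdef
  have hgc : ContinuousOn g (Set.Ici (0:ℝ)) := hg.continuousOn
  have hhcont : ContinuousOn h (Set.Ici (0:ℝ)) := by
    apply hgc.sub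
    exact (Continuous.continuousOn ((continuous_const.sub (continuous_const.mul (Real.continuous_exp.comp continuous_neg))).mul continuous_const))
  have hexp0 : Tendsto (fun t : ℝ => Real.exp (-t)) atTop (nhds 0) := by
    exact Real.tendsto_exp_atBot.comp tendsto_neg_atTop_atBot
  have hhlim : Tendsto h atTop (nhds 0) := by
    have : Tendsto (fun t => g t - (1 - a * Real.exp (-t)) * G) atTop
        (nhds (G - (1 - a * 0) * G)) := by
      exact hlim.sub (((tendsto_const_nhds.sub (hexp0.const_mul a)).mul_const G))
    simpa using this
  -- w = φ (x - G)
  set w : ℝ → ℝ := fun t => φ t * (x t - G) with hwdef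
  have hw : ∀ t : ℝ, 0 ≤ t → HasDerivAt w (φ t * h t) t := by
    intro t ht
    have := (hφderiv t).mul ((hode t ht).sub_const G)
    refine this.congr_deriv ?_
    simp only [hhdef]
    ring
  -- integral representation
  have hrep : ∀ T t : ℝ, 0 ≤ T → T ≤ t → w t - w T = ∫ s in T..t, φ s * h s := by
    intro T t hT hTt
    symm
    apply intervalIntegral.integral_eq_sub_of_hasDerivAt
    · intro s hs
      rw [Set.uIcc_of_le hTt] at hs
      exact hw s (le_trans hT hs.1)
    · apply ContinuousOn.intervalIntegrable
      apply ContinuousOn.mul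
      · exact Continuous.continuousOn (Real.continuous_exp.comp (continuous_id.add (continuous_const.mul (Real.continuous_exp.comp continuous_neg))))
      · apply hhcont.mono
        rw [Set.uIcc_of_le hTt]
        exact fun s hs => le_trans hT hs.1
  -- bounds on φ
  set K : ℝ := Real.exp |a| with hKdef
  have hK1 : (1:ℝ) ≤ K := Real.one_le_exp (abs_nonneg a)
  have hKpos : 0 < K := lt_of_lt_of_le one_pos hK1
  have hφub : ∀ s : ℝ, 0 ≤ s → φ s ≤ K * Real.exp s := by
    intro s hs
    have h1 : a * Real.exp (-s) ≤ |a| := by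
      calc a * Real.exp (-s) ≤ |a * Real.exp (-s)| := le_abs_self _
        _ = |a| * Real.exp (-s) := by rw [abs_mul, abs_of_pos (Real.exp_pos _)]
        _ ≤ |a| * 1 := by
            apply mul_le_mul_of_nonneg_left _ (abs_nonneg a)
            exact Real.exp_le_one_iff.mpr (by linarith)
        _ = |a| := mul_one _
    calc φ s = Real.exp (s + a * Real.exp (-s)) := rfl
      _ ≤ Real.exp (s + |a|) := Real.exp_le_exp.mpr (by linarith)
      _ = K * Real.exp s := by rw [hKdef, ← Real.exp_add]; ring_nf
  have hφlb : ∀ s : ℝ, 0 ≤ s → Real.exp s ≤ K * φ s := by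
    intro s hs
    have h1 : -|a| ≤ a * Real.exp (-s) := by
      have := neg_abs_le (a * Real.exp (-s))
      have h2 : |a * Real.exp (-s)| ≤ |a| := by
        rw [abs_mul, abs_of_pos (Real.exp_pos _)]
        calc |a| * Real.exp (-s) ≤ |a| * 1 := by
              apply mul_le_mul_of_nonneg_left _ (abs_nonneg a)
              exact Real.exp_le_one_iff.mpr (by linarith)
          _ = |a| := mul_one _
      linarith
    calc Real.exp s = Real.exp (|a| + (s - |a|)) := by ring_nf
      _ = K * Real.exp (s - |a|) := by rw [hKdef, ← Real.exp_add]
      _ ≤ K * φ s := by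
          apply mul_le_mul_of_nonneg_left _ (le_of_lt hKpos)
          exact Real.exp_le_exp.mpr (by linarith)
  -- reduce to x - G → 0
  have key : Tendsto (fun t => x t - G) atTop (nhds 0) := by
    rw [NormedAddCommGroup.tendsto_nhds_zero]
    intro ε hε
    set ε1 : ℝ := ε / (2 * (K * K)) with hε1def
    have hε1pos : 0 < ε1 := by positivity
    obtain ⟨T₀, hT₀⟩ := (Metric.tendsto_atTop.mp hhlim) ε1 hε1pos
    set T : ℝ := max T₀ 0 with hTdef
    have hT0 : (0:ℝ) ≤ T := le_max_right _ _
    have hTsmall : ∀ s, T ≤ s → |h s| ≤ ε1 := by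
      intro s hs
      have := hT₀ s (le_trans (le_max_left _ _) hs)
      rw [Real.dist_eq, sub_zero] at this
      linarith
    set C : ℝ := |w T| with hCdef
    have hdecay : Tendsto (fun t : ℝ => C * K * Real.exp (-t)) atTop (nhds 0) := by
      simpa using hexp0.const_mul (C * K)
    have hev : ∀ᶠ t in atTop, C * K * Real.exp (-t) < ε / 2 := by
      have := hdecay.eventually (gt_mem_nhds (show (0:ℝ) < ε/2 by linarith))
      exact this
    filter_upwards [eventually_ge_atTop T, hev] with t hTt h2
    have ht0 : (0:ℝ) ≤ t := le_trans hT0 hTt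
    -- bound the integral
    have hint : w t = w T + ∫ s in T..t, φ s * h s := by
      have := hrep T t hT0 hTt; linarith
    have hintbd : |∫ s in T..t, φ s * h s| ≤ ε1 * K * Real.exp t := by
      have step1 : ‖∫ s in T..t, φ s * h s‖ ≤ ∫ s in T..t, ‖φ s * h s‖ :=
        intervalIntegral.norm_integral_le_integral_norm hTt
      have int1 : IntervalIntegrable (fun s => ‖φ s * h s‖) MeasureTheory.volume T t := by
        apply ContinuousOn.intervalIntegrable
        apply ContinuousOn.norm
        apply ContinuousOn.mul
        · exact Continuous.continuousOn (Real.continuous_exp.comp (continuous_id.add (continuous_const.mul (Real.continuous_exp.comp continuous_neg))))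
        · apply hhcont.mono
          rw [Set.uIcc_of_le hTt]
          exact fun s hs => le_trans hT0 hs.1
      have int2 : IntervalIntegrable (fun s => ε1 * (K * Real.exp s))
          MeasureTheory.volume T t :=
        ContinuousOn.intervalIntegrable (Continuous.continuousOn (continuous_const.mul (continuous_const.mul Real.continuous_exp)))
      have step2 : (∫ s in T..t, ‖φ s * h s‖) ≤ ∫ s in T..t, ε1 * (K * Real.exp s) := by
        apply intervalIntegral.integral_mono_on hTt int1 int2
        intro s hs
        have hs0 : (0:ℝ) ≤ s := le_trans hT0 hs.1
        have hφb := hφub s hs0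
        have hhb := hTsmall s hs.1
        calc ‖φ s * h s‖ = φ s * |h s| := by
              rw [Real.norm_eq_abs, abs_mul, abs_of_pos (hφpos s)]
          _ ≤ (K * Real.exp s) * ε1 := by
              apply mul_le_mul hφb hhb (abs_nonneg _)
              positivity
          _ = ε1 * (K * Real.exp s) := by ring
      have step3 : (∫ s in T..t, ε1 * (K * Real.exp s)) = ε1 * K * (Real.exp t - Real.exp T) := by
        rw [intervalIntegral.integral_const_mul]
        have : (∫ s in T..t, K * Real.exp s) = K * (Real.exp t - Real.exp T) := by
          rw [intervalIntegral.integral_const_mul, integral_exp]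
        rw [this]; ring
      have step4 : ε1 * K * (Real.exp t - Real.exp T) ≤ ε1 * K * Real.exp t := by
        nlinarith [mul_pos (mul_pos hε1pos hKpos) (Real.exp_pos T)]
      calc |∫ s in T..t, φ s * h s| = ‖∫ s in T..t, φ s * h s‖ := (Real.norm_eq_abs _).symm
        _ ≤ ∫ s in T..t, ‖φ s * h s‖ := step1
        _ ≤ ∫ s in T..t, ε1 * (K * Real.exp s) := step2
        _ = ε1 * K * (Real.exp t - Real.exp T) := step3
        _ ≤ ε1 * K * Real.exp t := step4
    -- now conclude
    have hxw : x t - G = w t / φ t := by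
      rw [hwdef]
      field_simp
      exact (mul_div_cancel_right₀ _ (hφpos t).ne').symm
    have hwbd : |w t| ≤ C + ε1 * K * Real.exp t := by
      rw [hint]
      calc |w T + ∫ s in T..t, φ s * h s| ≤ |w T| + |∫ s in T..t, φ s * h s| := abs_add_le _ _
        _ ≤ C + ε1 * K * Real.exp t := by rw [← hCdef]; linarith
    have hinv : 1 / φ t ≤ K * Real.exp (-t) := by
      rw [div_le_iff₀ (hφpos t)]
      have := hφlb t ht0
      have hee : Real.exp (-t) * Real.exp t = 1 := by
        rw [← Real.exp_add]; simp
      nlinarith [Real.exp_pos (-t), hφpos t]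
    have het : Real.exp t * Real.exp (-t) = 1 := by
      rw [← Real.exp_add]; simp
    calc ‖x t - G‖ = |w t| / φ t := by rw [hxw, Real.norm_eq_abs, abs_div,
          abs_of_pos (hφpos t)]
      _ = |w t| * (1 / φ t) := by ring
      _ ≤ (C + ε1 * K * Real.exp t) * (K * Real.exp (-t)) := by
          apply mul_le_mul hwbd hinv _ (by positivity)
          positivity
      _ = C * K * Real.exp (-t) + ε1 * (K * K) * (Real.exp t * Real.exp (-t)) := by ring
      _ = C * K * Real.exp (-t) + ε / 2 := by
          rw [het, hε1def]
          field_simp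
      _ < ε / 2 + ε / 2 := by linarith
      _ = ε := by ring
  have := key.add_const G
  simpa using this
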